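/- Let 1 ≤ k < n/2. If S is an n×n partial latin square whose first k rows are completely filled, whose row k+1 contains at most n−2k filled cells, and which has no other filled cells, then S can be extended to a partial latin square in which the first k+1 rows are completely filled. -/

import Mathlib

/-- A partial latin square of order `n`: cells (indexed by `1..n × 1..n`) are
empty (`none`) or filled with a symbol of `{1,…,n}`, no symbol repeated in a
row or column. -/
def IsPLS (n : ℕ) (S : ℕ → ℕ → Option ℕ) : Prop :=
  (∀ i j s, S i j = some s →
      i ∈ Finset.Icc 1 n ∧ j ∈ Finset.Icc 1 n ∧ s ∈ Finset.Icc 1 n) ∧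
  (∀ i j j' s, S i j = some s → S i j' = some s → j = j') ∧
  (∀ i i' j s, S i j = some s → S i' j = some s → i = i')

/-- If `1 ≤ k < n/2` and `S` is a partial latin square of order `n` whose first
`k` rows are filled, whose row `k+1` has at most `n − 2k` filled cells, and
which has no other filled cells, then `S` extends to a partial latin square
with the first `k+1` rows completely filled. -/
theorem pls_extend_row (n k : ℕ) (hk : 1 ≤ k) (hkn : 2 * k < n)
    (S : ℕ → ℕ → Option ℕ) (hS : IsPLS n S)
    (hfull : ∀ i ∈ Finset.Icc 1 k, ∀ j ∈ Finset.Icc 1 n, (S i j).isSome)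
    (hcount :
      ((Finset.Icc 1 n).filter (fun j => (S (k + 1) j).isSome)).card ≤ n - 2 * k)
    (hempty : ∀ i, k + 1 < i → ∀ j, S i j = none) :
    ∃ S' : ℕ → ℕ → Option ℕ, IsPLS n S' ∧
      (∀ i j s, S i j = some s → S' i j = some s) ∧
      (∀ i ∈ Finset.Icc 1 (k + 1), ∀ j ∈ Finset.Icc 1 n, (S' i j).isSome) := by
  obtain ⟨hbd, hrow, hcol⟩ := hS
  set N : Finset ℕ := Finset.Icc 1 n with hNdef
  have hNcard : N.card = n := by simp [hNdef]
  set m : ℕ := (N.filter (fun j => (S (k + 1) j).isSome)).card with hmdef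
  set E : Finset ℕ := N.filter (fun j => S (k + 1) j = none) with hEdef
  set RS : Finset ℕ := N.biUnion (fun j => (S (k + 1) j).toFinset) with hRSdef
  set CS : ℕ → Finset ℕ :=
    fun j => (Finset.Icc 1 k).biUnion (fun i => (S i j).toFinset) with hCSdef
  set A : ℕ → Finset ℕ := fun j => N \ (RS ∪ CS j) with hAdef
  clear_value N m E RS CS A
  have hm : m ≤ n - 2 * k := hcount
  have hCSmem : ∀ j s, s ∈ CS j ↔ ∃ i ∈ Finset.Icc 1 k, S i j = some s := by
    intro j s
    rw [hCSdef]
    simp [Finset.mem_biUnion, Option.mem_toFinset, Option.mem_def]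
  have hRSmem : ∀ s, s ∈ RS ↔ ∃ j ∈ N, S (k + 1) j = some s := by
    intro s
    rw [hRSdef]
    simp [Finset.mem_biUnion, Option.mem_toFinset, Option.mem_def]
  have hEmem : ∀ j, j ∈ E ↔ j ∈ N ∧ S (k + 1) j = none := by
    intro j
    rw [hEdef]
    exact Finset.mem_filter
  have hAmem : ∀ j s, s ∈ A j ↔ s ∈ N ∧ ¬(s ∈ RS ∨ s ∈ CS j) := by
    intro j s
    rw [hAdef]
    simp only [Finset.mem_sdiff, Finset.mem_union]
  -- cardinality of E
  have hEcard : E.card + m = n := by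
    have := Finset.card_filter_add_card_filter_not
      (s := N) (p := fun j => (S (k + 1) j).isSome)
    rw [hNcard] at this
    have he : E = N.filter (fun j => ¬ (S (k + 1) j).isSome) := by
      rw [hEdef]
      apply Finset.filter_congr
      intro j _
      simp [Option.isSome_iff_ne_none]
    rw [he]
    omega
  -- cardinality of RS
  have hRScard : RS.card ≤ m := by
    have hsub : RS ⊆ (N.filter (fun j => (S (k + 1) j).isSome)).image
        (fun j => (S (k + 1) j).getD 0) := by
      intro s hs
      rw [hRSmem] at hs
      obtain ⟨j, hjN, hj⟩ := hs
      refine Finset.mem_image.mpr ⟨j, ?_, ?_⟩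
      · exact Finset.mem_filter.mpr ⟨hjN, by simp [hj]⟩
      · simp [hj]
    calc RS.card ≤ _ := Finset.card_le_card hsub
      _ ≤ m := by rw [hmdef]; exact Finset.card_image_le
  -- cardinality of CS j
  have hCScard : ∀ j, (CS j).card ≤ k := by
    intro j
    have hsub : CS j ⊆ (Finset.Icc 1 k).image (fun i => (S i j).getD 0) := by
      intro s hs
      rw [hCSmem] at hs
      obtain ⟨i, hik, hi⟩ := hs
      exact Finset.mem_image.mpr ⟨i, hik, by simp [hi]⟩
    calc (CS j).card ≤ _ := Finset.card_le_card hsub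
      _ ≤ (Finset.Icc 1 k).card := Finset.card_image_le
      _ = k := by simp
  -- cardinality of A j
  have hAcard : ∀ j, n - (m + k) ≤ (A j).card := by
    intro j
    have h1 : (RS ∪ CS j).card ≤ m + k := by
      calc (RS ∪ CS j).card ≤ RS.card + (CS j).card := Finset.card_union_le _ _
        _ ≤ m + k := Nat.add_le_add hRScard (hCScard j)
    have h2 := Finset.le_card_sdiff (RS ∪ CS j) N
    rw [hNcard] at h2
    have h3 : A j = N \ (RS ∪ CS j) := by rw [hAdef]
    rw [h3]
    omega
  -- the Hall condition
  have hall : ∀ T : Finset ↥E, T.card ≤ (T.biUnion (fun x => A x.1)).card := by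
    intro T
    rcases T.eq_empty_or_nonempty with hT | ⟨x0, hx0⟩
    · simp [hT]
    by_cases hTk : T.card ≤ k
    · -- small T: one set already big enough
      have h1 : A x0.1 ⊆ T.biUnion (fun x => A x.1) :=
        Finset.subset_biUnion_of_mem (fun x => A x.1) hx0
      have h2 := Finset.card_le_card h1
      have h3 := hAcard x0.1
      omega
    · -- big T: every symbol outside the row appears
      have hsub : N \ RS ⊆ T.biUnion (fun x => A x.1) := by
        intro s hs
        rw [Finset.mem_sdiff] at hs
        -- columns of T where s appears among rows 1..k
        set T' : Finset ↥E := T.filter (fun x => s ∈ CS x.1) with hT'def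
        have hT'mem : ∀ x, x ∈ T' ↔ x ∈ T ∧ s ∈ CS x.1 := by
          intro x
          rw [hT'def]
          exact Finset.mem_filter
        have hT'card : T'.card ≤ k := by
          classical
          have : T'.card ≤ (Finset.Icc 1 k).card := by
            apply Finset.card_le_card_of_injOn
              (fun x => if h : ∃ i ∈ Finset.Icc 1 k, S i x.1 = some s then h.choose else 0)
            · intro x hx
              rw [Finset.mem_coe, hT'mem] at hx
              have hex : ∃ i ∈ Finset.Icc 1 k, S i x.1 = some s :=
                (hCSmem _ _).mp hx.2
              simp only [dif_pos hex]
              exact hex.choose_spec.1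
            · intro x hx y hy hxy
              simp only [Finset.mem_coe] at hx hy
              rw [hT'mem] at hx hy
              have hex : ∃ i ∈ Finset.Icc 1 k, S i x.1 = some s :=
                (hCSmem _ _).mp hx.2
              have hey : ∃ i ∈ Finset.Icc 1 k, S i y.1 = some s :=
                (hCSmem _ _).mp hy.2
              simp only [dif_pos hex, dif_pos hey] at hxy
              have h1 := hex.choose_spec.2
              have h2 := hey.choose_spec.2
              rw [hxy] at h1
              exact Subtype.ext (hrow _ _ _ _ h1 h2)
          simpa using this
        have hne : T' ≠ T := by
          intro h
          rw [h] at hT'card; omega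
        obtain ⟨x, hxT, hxT'⟩ : ∃ x ∈ T, x ∉ T' := by
          by_contra hcon
          push_neg at hcon
          refine hne (Finset.Subset.antisymm ?_ hcon)
          rw [hT'def]
          exact Finset.filter_subset _ _
        have hxCS : s ∉ CS x.1 := by
          intro hcs
          exact hxT' ((hT'mem x).mpr ⟨hxT, hcs⟩)
        refine Finset.mem_biUnion.mpr ⟨x, hxT, ?_⟩
        rw [hAmem]
        exact ⟨hs.1, fun h => h.elim hs.2 hxCS⟩
      have h1 := Finset.card_le_card hsub
      have h2 : RS ⊆ N := by
        intro s hs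
        obtain ⟨j, -, hj⟩ := (hRSmem s).mp hs
        exact (hbd _ _ _ hj).2.2
      have h3 : (N \ RS).card = N.card - RS.card := Finset.card_sdiff_of_subset h2
      have h4 : T.card ≤ E.card := by
        have := Finset.card_le_univ T
        simpa [Fintype.card_coe] using this
      rw [hNcard] at h3
      omega
  -- apply Hall's theorem
  obtain ⟨f, hfinj, hfmem⟩ :=
    (Finset.all_card_le_biUnion_card_iff_existsInjective' (fun x : ↥E => A x.1)).mp hall
  have hfN : ∀ x, f x ∈ N := fun x => ((hAmem _ _).mp (hfmem x)).1
  have hfRS : ∀ x, f x ∉ RS := by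
    intro x hx
    exact ((hAmem _ _).mp (hfmem x)).2 (Or.inl hx)
  have hfCS : ∀ x, f x ∉ CS x.1 := by
    intro x hx
    exact ((hAmem _ _).mp (hfmem x)).2 (Or.inr hx)
  -- f avoids the row
  have hfrow : ∀ (x : ↥E) (j : ℕ), S (k + 1) j ≠ some (f x) := by
    intro x j hj
    have hjN : j ∈ N := (hbd _ _ _ hj).2.1
    exact hfRS x ((hRSmem _).mpr ⟨j, hjN, hj⟩)
  -- f avoids the column
  have hfcol : ∀ (x : ↥E) (i : ℕ), i ∈ Finset.Icc 1 k → S i x.1 ≠ some (f x) := by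
    intro x i hik hi
    exact hfCS x ((hCSmem _ _).mpr ⟨i, hik, hi⟩)
  -- the extension
  set S' : ℕ → ℕ → Option ℕ :=
    fun i j => if h : i = k + 1 ∧ j ∈ E then some (f ⟨j, h.2⟩) else S i j with hS'def
  have hS'eq : ∀ i j, S' i j =
      dite (i = k + 1 ∧ j ∈ E) (fun h => some (f ⟨j, h.2⟩)) (fun _ => S i j) :=
    fun _ _ => rfl
  clear_value S'
  refine ⟨S', ⟨?_, ?_, ?_⟩, ?_, ?_⟩
  · -- bounds
    intro i j s hs
    rw [hS'eq] at hs
    by_cases h : i = k + 1 ∧ j ∈ E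
    · rw [dif_pos h] at hs
      have hjE := (hEmem j).mp h.2
      rw [← hNdef]
      refine ⟨?_, hjE.1, ?_⟩
      · rw [hNdef, Finset.mem_Icc]; omega
      · rw [← Option.some_inj.mp hs]
        exact hfN ⟨j, h.2⟩
    · rw [dif_neg h] at hs
      rw [← hNdef]
      exact hbd _ _ _ hs
  · -- rows
    intro i j j' s h1 h2
    rw [hS'eq] at h1 h2
    by_cases ha : i = k + 1 ∧ j ∈ E <;> by_cases hb : i = k + 1 ∧ j' ∈ E
    · rw [dif_pos ha] at h1
      rw [dif_pos hb] at h2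
      have : f ⟨j, ha.2⟩ = f ⟨j', hb.2⟩ :=
        (Option.some_inj.mp h1).trans (Option.some_inj.mp h2).symm
      exact congrArg Subtype.val (hfinj this)
    · rw [dif_pos ha] at h1
      rw [dif_neg hb] at h2
      exfalso
      rw [ha.1] at h2
      rw [← Option.some_inj.mp h1] at h2
      exact hfrow _ _ h2
    · rw [dif_neg ha] at h1
      rw [dif_pos hb] at h2
      exfalso
      rw [hb.1] at h1
      rw [← Option.some_inj.mp h2] at h1
      exact hfrow _ _ h1
    · rw [dif_neg ha] at h1
      rw [dif_neg hb] at h2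
      exact hrow _ _ _ _ h1 h2
  · -- columns
    intro i i' j s h1 h2
    rw [hS'eq] at h1 h2
    by_cases ha : i = k + 1 ∧ j ∈ E <;> by_cases hb : i' = k + 1 ∧ j ∈ E
    · rw [ha.1, hb.1]
    · rw [dif_pos ha] at h1
      rw [dif_neg hb] at h2
      exfalso
      have hi' : i' ≠ k + 1 := fun h => hb ⟨h, ha.2⟩
      have hbd' := hbd _ _ _ h2
      have h1i' : 1 ≤ i' := by
        have := hbd'.1; rw [hNdef, Finset.mem_Icc] at this; exact this.1
      rcases lt_trichotomy i' (k + 1) with hlt | heq | hgt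
      · have hik : i' ∈ Finset.Icc 1 k := Finset.mem_Icc.mpr ⟨h1i', by omega⟩
        rw [← Option.some_inj.mp h1] at h2
        exact hfcol ⟨j, ha.2⟩ _ hik h2
      · exact hi' heq
      · rw [hempty i' hgt j] at h2; exact Option.some_ne_none _ h2.symm
    · rw [dif_neg ha] at h1
      rw [dif_pos hb] at h2
      exfalso
      have hi : i ≠ k + 1 := fun h => ha ⟨h, hb.2⟩
      have hbd' := hbd _ _ _ h1
      have h1i : 1 ≤ i := by
        have := hbd'.1; rw [hNdef, Finset.mem_Icc] at this; exact this.1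
      rcases lt_trichotomy i (k + 1) with hlt | heq | hgt
      · have hik : i ∈ Finset.Icc 1 k := Finset.mem_Icc.mpr ⟨h1i, by omega⟩
        rw [← Option.some_inj.mp h2] at h1
        exact hfcol ⟨j, hb.2⟩ _ hik h1
      · exact hi heq
      · rw [hempty i hgt j] at h1; exact Option.some_ne_none _ h1.symm
    · rw [dif_neg ha] at h1
      rw [dif_neg hb] at h2
      exact hcol _ _ _ _ h1 h2
  · -- extension
    intro i j s hs
    rw [hS'eq]
    have h : ¬ (i = k + 1 ∧ j ∈ E) := by
      rintro ⟨hi, hj⟩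
      rw [hEmem] at hj
      rw [hi, hj.2] at hs
      exact Option.some_ne_none _ hs.symm
    rw [dif_neg h]
    exact hs
  · -- first k+1 rows full
    intro i hi j hj
    rw [hS'eq]
    rw [Finset.mem_Icc] at hi
    by_cases hik : i ≤ k
    · have h : ¬ (i = k + 1 ∧ j ∈ E) := by rintro ⟨hi', -⟩; omega
      rw [dif_neg h]
      exact hfull i (Finset.mem_Icc.mpr ⟨hi.1, hik⟩) j hj
    · have hi1 : i = k + 1 := by omega
      by_cases hjE : j ∈ E
      · rw [dif_pos ⟨hi1, hjE⟩]; rfl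
      · rw [dif_neg (fun h => hjE h.2)]
        have hne : ¬ S (k + 1) j = none := by
          intro h
          exact hjE ((hEmem j).mpr ⟨hj, h⟩)
        rw [hi1]
        exact Option.isSome_iff_ne_none.mpr hne
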